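/- Let A be a group and X, Y, W subgroups of A, with X, Y normal in A. If there exists a homomorphism m : (W*X) ×_W (W*Y) → A making the two inclusions W*X → A and W*Y → A (induced by the inclusions of W, X, Y in A) factor through m via the canonical maps ⟨1, ι₁[1,0]⟩ and ⟨ι₁[1,0], 1⟩, and W = A with w = id, then the subgroups X and Y commute elementwise: [X,Y] = 1. -/
import Mathlib


open Monoid

variable {A : Type*} [Group A]

/-- The retraction `[1,0] : A ∗ X →* A` killing the subgroup `X`. -/
def retr (X : Subgroup A) : Coprod A X →* A :=
  Coprod.lift (MonoidHom.id A) (1 : X →* A)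

/-- The evaluation `[1,x] : A ∗ X →* A` induced by the identity and the inclusion. -/
def eval (X : Subgroup A) : Coprod A X →* A :=
  Coprod.lift (MonoidHom.id A) X.subtype

/-- The commutator subgroup `[P, Q]` generated by all `p⁻¹ q⁻¹ p q`. -/
def commSub {G : Type*} [Group G] (P Q : Subgroup G) : Subgroup G :=
  Subgroup.closure {g : G | ∃ p ∈ P, ∃ q ∈ Q, g = p⁻¹ * q⁻¹ * p * q}

/-- (1-weighted centrality, `W = A`, `w = id`.) If `X`, `Y` are normal subgroups of
`A` and there is an internal multiplication `m` on the pullback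
`(A ∗ X) ×_A (A ∗ Y) = {(u,v) : [1,0](u) = [1,0](v)}`, multiplicative on the
pullback and restricting to the evaluations `A ∗ X →* A`, `A ∗ Y →* A` along the
canonical maps `⟨1, ι₁[1,0]⟩` and `⟨ι₁[1,0], 1⟩`, then `[X,Y] = 1`. -/
theorem stmt17 (X Y : Subgroup A) [X.Normal] [Y.Normal]
    (m : Coprod A X → Coprod A Y → A)
    (hmul : ∀ (u u' : Coprod A X) (v v' : Coprod A Y),
      retr X u = retr Y v → retr X u' = retr Y v' →
      m (u * u') (v * v') = m u v * m u' v')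
    (h1 : ∀ u : Coprod A X, m u (Coprod.inl (retr X u)) = eval X u)
    (h2 : ∀ v : Coprod A Y, m (Coprod.inl (retr Y v)) v = eval Y v) :
    commSub X Y = ⊥ := by
  have key : ∀ x ∈ X, ∀ y ∈ Y, x * y = y * x := by
    intro x hx y hy
    have rX : retr X (Coprod.inr ⟨x, hx⟩) = 1 := by simp [retr]
    have rY : retr Y (Coprod.inr ⟨y, hy⟩) = 1 := by simp [retr]
    have hx1 : m (Coprod.inr ⟨x, hx⟩) 1 = x := by
      have := h1 (Coprod.inr ⟨x, hx⟩)
      rwa [rX, map_one, eval, Coprod.lift_apply_inr] at this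
    have h1y : m 1 (Coprod.inr ⟨y, hy⟩) = y := by
      have := h2 (Coprod.inr ⟨y, hy⟩)
      rwa [rY, map_one, eval, Coprod.lift_apply_inr] at this
    have e1 : m (Coprod.inr ⟨x, hx⟩ * 1) (1 * Coprod.inr ⟨y, hy⟩)
        = m (Coprod.inr ⟨x, hx⟩) 1 * m 1 (Coprod.inr ⟨y, hy⟩) :=
      hmul _ _ _ _ (by simp [rX]) (by simp [rY])
    have e2 : m (1 * Coprod.inr ⟨x, hx⟩) (Coprod.inr ⟨y, hy⟩ * 1)
        = m 1 (Coprod.inr ⟨y, hy⟩) * m (Coprod.inr ⟨x, hx⟩) 1 :=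
      hmul _ _ _ _ (by simp [rY]) (by simp [rX])
    simp only [mul_one, one_mul] at e1 e2
    rw [e1, hx1, h1y] at e2
    exact e2
  rw [commSub, eq_bot_iff]
  rw [Subgroup.closure_le]
  rintro g ⟨p, hp, q, hq, rfl⟩
  have := key p hp q hq
  simp only [Subgroup.coe_bot, Set.mem_singleton_iff]
  have h : p⁻¹ * q⁻¹ * p * q = p⁻¹ * q⁻¹ * (p * q) := by group
  rw [h, this]
  group
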